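/- Let G be a simple graph and let Δ ≥ 1 and q ≥ 1 be integers. Suppose there exist q partial proper colorings c_1, …, c_q of G, where each c_i assigns to some subset of the vertices a color from {1,…,Δ} such that any two adjacent vertices that are both colored by c_i receive distinct colors, and suppose every vertex of G is left uncolored by at most one of c_1, …, c_q. Then G admits a (qΔ : q−1)-coloring. -/

import Mathlib

/-- A `(p:q)`-coloring of `G`: each vertex gets a set of at least `q` colors out of
`p` colors, with adjacent vertices receiving disjoint sets. -/
def HasPQColoring {V : Type*} (G : SimpleGraph V) (p q : ℕ) : Prop :=
  ∃ X : V → Finset (Fin p), (∀ v, q ≤ (X v).card) ∧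
    ∀ ⦃u v⦄, G.Adj u v → Disjoint (X u) (X v)

/-- given `q` partial proper colorings of `G` with colors from
`{1,…,Δ}` (modelled as `V → Option (Fin Δ)`, `none` meaning uncolored), such that
every vertex is left uncolored by at most one of them, `G` admits a
`(qΔ : q−1)`-coloring. -/
theorem pq_coloring_of_partial_colorings {V : Type*} (G : SimpleGraph V)
    (Δ q : ℕ) (hΔ : 1 ≤ Δ) (hq : 1 ≤ q)
    (col : Fin q → V → Option (Fin Δ))
    (hproper : ∀ (i : Fin q) (u v : V) (a b : Fin Δ),
      G.Adj u v → col i u = some a → col i v = some b → a ≠ b)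
    (hmiss : ∀ v : V, (Finset.univ.filter fun i : Fin q => col i v = none).card ≤ 1) :
    HasPQColoring G (q * Δ) (q - 1) := by
  classical
  refine ⟨fun v => Finset.univ.biUnion
      (fun i : Fin q => (col i v).toFinset.image (fun a => finProdFinEquiv (i, a))), ?_, ?_⟩
  · intro v
    rw [Finset.card_biUnion]
    · have hcard : ∀ i : Fin q,
          ((col i v).toFinset.image (fun a => finProdFinEquiv (i, a))).card
            = if col i v = none then 0 else 1 := by
        intro i; cases h : col i v <;> simp [h]
      calc q - 1 ≤ q - (Finset.univ.filter fun i : Fin q => col i v = none).card := by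
              exact Nat.sub_le_sub_left (hmiss v) q
           _ = (Finset.univ.filter fun i : Fin q => ¬ col i v = none).card := by
              have := Finset.card_filter_add_card_filter_not
                (s := (Finset.univ : Finset (Fin q))) (p := fun i => col i v = none)
              simp only [Finset.card_univ, Fintype.card_fin] at this
              omega
           _ = ∑ i : Fin q, if col i v = none then 0 else 1 := by
              rw [Finset.card_filter]; simp
           _ = ∑ i : Fin q,
              ((col i v).toFinset.image (fun a => finProdFinEquiv (i, a))).card := by
              simp [hcard]
    · intro i _ j _ hij
      rw [Function.onFun, Finset.disjoint_left]
      intro x hx hx'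
      simp only [Finset.mem_image, Option.mem_toFinset] at hx hx'
      obtain ⟨a, _, rfl⟩ := hx
      obtain ⟨b, _, he⟩ := hx'
      have := finProdFinEquiv.injective he
      exact hij (congrArg Prod.fst this).symm
  · intro u v huv
    rw [Finset.disjoint_left]
    intro x hx hx'
    simp only [Finset.mem_biUnion, Finset.mem_image, Option.mem_toFinset,
      Finset.mem_univ, true_and] at hx hx'
    obtain ⟨i, a, ha, rfl⟩ := hx
    obtain ⟨j, b, hb, he⟩ := hx'
    have h2 := finProdFinEquiv.injective he
    rw [Prod.mk.injEq] at h2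
    obtain ⟨rfl, rfl⟩ := h2
    exact hproper j u v b b huv (Option.mem_def.mp ha) (Option.mem_def.mp hb) rfl
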